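/- Let X be a nonempty finite type and p : ℝ → X → ℝ a parametrized family of probability mass functions (p(θ, x) > 0, ∑_{x∈X} p(θ, x) = 1, and θ ↦ p(θ, x) differentiable for each x). Let g : X → ℝ and let 2 ≤ k ≤ n. Define maxg@k(θ) = ∑_{y : Fin k → X} (∏_{i} p(θ, yᵢ)) · max_{1≤i≤k} g(yᵢ). For a tuple x : Fin n → X, define s_i^{loo−1}(x) = (1/C(n,k)) · ∑_{I ⊆ {1,...,n}, |I| = k, i ∈ I} ( max_{j∈I} g(x_j) − max_{b∈I∖{i}} g(x_b) ). Then for every θ: ∑_{x : Fin n → X} (∏_{i} p(θ, xᵢ)) · ∑_{i=1}^{n} s_i^{loo−1}(x) · (d/dθ p(θ, xᵢ))/p(θ, xᵢ) = d/dθ maxg@k(θ). -/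

import Mathlib

open Finset

/-- The maximum of `g` over a finite index set `I` (equal to `max_{i ∈ I} g i`
whenever `I` is nonempty). -/
noncomputable def finsetMax {α : Type*} (I : Finset α) (g : α → ℝ) : ℝ :=
  WithBot.unbotD 0 (I.sup fun a => ((g a : ℝ) : WithBot ℝ))

section Helpers

variable {X : Type*} [Fintype X] [Nonempty X] (p : ℝ → X → ℝ) (θ : ℝ)

lemma sumP_one {ι : Type*} [Fintype ι] [DecidableEq ι] (hsum : ∀ θ, ∑ x, p θ x = 1) :
    ∑ y : ι → X, ∏ a, p θ (y a) = 1 := by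
  classical
  have h := Finset.prod_univ_sum (fun _ : ι => (Finset.univ : Finset X)) (fun _ v => p θ v)
  simp only [Fintype.piFinset_univ] at h
  rw [← h]
  simp [hsum θ]

lemma sum_deriv_zero (hsum : ∀ θ, ∑ x, p θ x = 1)
    (hdiff : ∀ x, Differentiable ℝ fun θ => p θ x) :
    ∑ v : X, deriv (fun t => p t v) θ = 0 := by
  have h : HasDerivAt (fun t : ℝ => ∑ v, p t v) (∑ v : X, deriv (fun t => p t v) θ) θ :=
    HasDerivAt.fun_sum fun v _ => ((hdiff v) θ).hasDerivAt
  have h2 : (fun t : ℝ => ∑ v, p t v) = fun _ => (1 : ℝ) := funext hsum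
  rw [h2] at h
  exact h.unique (hasDerivAt_const θ 1)

lemma finsetMax_equiv {α β : Type*} [Fintype α] [Fintype β] (e : α ≃ β) (f : β → ℝ) :
    finsetMax (Finset.univ : Finset α) (fun a => f (e a))
      = finsetMax (Finset.univ : Finset β) f := by
  unfold finsetMax
  congr 1
  apply le_antisymm
  · exact Finset.sup_le fun a _ =>
      Finset.le_sup (f := fun b : β => ((f b : ℝ) : WithBot ℝ)) (mem_univ (e a))
  · refine Finset.sup_le fun b _ => ?_
    have := Finset.le_sup (f := fun a : α => ((f (e a) : ℝ) : WithBot ℝ)) (mem_univ (e.symm b))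
    simpa using this

lemma finsetMax_attach {α : Type*} (I : Finset α) (f : α → ℝ) :
    finsetMax (Finset.univ : Finset {a // a ∈ I}) (fun a => f a.1) = finsetMax I f := by
  unfold finsetMax
  rw [Finset.univ_eq_attach]
  exact congrArg _ (Finset.sup_attach I fun a => ((f a : ℝ) : WithBot ℝ))

lemma marginal {ι : Type*} [Fintype ι] [DecidableEq ι] (hsum : ∀ θ, ∑ x, p θ x = 1)
    (s : Finset ι) (G : ({a // a ∈ s} → X) → ℝ) :
    ∑ x : ι → X, (∏ a, p θ (x a)) * G (fun a => x a.1)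
      = ∑ z : {a // a ∈ s} → X, (∏ a, p θ (z a)) * G z := by
  classical
  rw [← Equiv.sum_comp (Equiv.piEquivPiSubtypeProd (fun a => a ∈ s) (fun _ => X)).symm
      (fun x : ι → X => (∏ a, p θ (x a)) * G fun a => x a.1), Fintype.sum_prod_type]
  refine Finset.sum_congr rfl fun z _ => ?_
  have key : ∀ w : {a // ¬ a ∈ s} → X,
      (∏ a, p θ ((Equiv.piEquivPiSubtypeProd (fun a => a ∈ s) (fun _ => X)).symm (z, w) a))
        = (∏ a, p θ (z a)) * ∏ a : {a // ¬ a ∈ s}, p θ (w a) := by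
    intro w
    rw [← Fintype.prod_subtype_mul_prod_subtype (fun a => a ∈ s)
      (fun a => p θ ((Equiv.piEquivPiSubtypeProd (fun a => a ∈ s) (fun _ => X)).symm (z, w) a))]
    congr 1
    · refine @Fintype.prod_equiv _ _ _ (Subtype.fintype _) _ _ (Equiv.refl _) _ _ fun a => ?_
      simp [Equiv.piEquivPiSubtypeProd, a.2]
    · refine @Fintype.prod_equiv _ _ _ (Subtype.fintype _) _ _ (Equiv.refl _) _ _ fun a => ?_
      simp [Equiv.piEquivPiSubtypeProd, a.2]
  have keyG : ∀ w : {a // ¬ a ∈ s} → X, (fun a : {a // a ∈ s} =>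
      (Equiv.piEquivPiSubtypeProd (fun a => a ∈ s) (fun _ => X)).symm (z, w) a.1) = z := by
    intro w; funext a; simp [Equiv.piEquivPiSubtypeProd, a.2]
  calc ∑ w : {a // ¬ a ∈ s} → X,
        (∏ a, p θ ((Equiv.piEquivPiSubtypeProd (fun a => a ∈ s) (fun _ => X)).symm (z, w) a))
          * G (fun a => (Equiv.piEquivPiSubtypeProd (fun a => a ∈ s) (fun _ => X)).symm (z, w) a.1)
      = ∑ w : {a // ¬ a ∈ s} → X,
          (∏ a : {a // ¬ a ∈ s}, p θ (w a)) * ((∏ a, p θ (z a)) * G z) := by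
        refine Finset.sum_congr rfl fun w _ => ?_
        rw [key w, keyG w]; ring
    _ = (∏ a, p θ (z a)) * G z := by
        rw [← Finset.sum_mul, sumP_one p θ hsum, one_mul]

lemma score_zero {ι : Type*} [Fintype ι] [DecidableEq ι]
    (hpos : ∀ θ x, 0 < p θ x) (hsum : ∀ θ, ∑ x, p θ x = 1)
    (hdiff : ∀ x, Differentiable ℝ fun θ => p θ x)
    (i : ι) (F : (ι → X) → ℝ)
    (hF : ∀ x y : ι → X, (∀ j, j ≠ i → x j = y j) → F x = F y) :
    ∑ x : ι → X, (∏ a, p θ (x a)) * (F x * (deriv (fun t => p t (x i)) θ / p θ (x i))) = 0 := by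
  classical
  set e := Equiv.piSplitAt i (fun _ : ι => X) with he
  rw [← Equiv.sum_comp e.symm
    (fun x : ι → X => (∏ a, p θ (x a)) * (F x * (deriv (fun t => p t (x i)) θ / p θ (x i)))),
    Fintype.sum_prod_type]
  set c : X := Classical.arbitrary X
  have hxi : ∀ v (w : {j // j ≠ i} → X), e.symm (v, w) i = v := by
    intro v w; simp [he, Equiv.piSplitAt]
  have hxj : ∀ v (w : {j // j ≠ i} → X) (j : ι) (hj : j ≠ i), e.symm (v, w) j = w ⟨j, hj⟩ := by
    intro v w j hj; simp [he, Equiv.piSplitAt, hj]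
  have hprod : ∀ v (w : {j // j ≠ i} → X),
      (∏ a, p θ (e.symm (v, w) a)) = p θ v * ∏ j : {j // j ≠ i}, p θ (w j) := by
    intro v w
    rw [← Finset.mul_prod_erase Finset.univ _ (Finset.mem_univ i), hxi]
    congr 1
    rw [Finset.prod_subtype (p := fun j => j ≠ i) (Finset.univ.erase i)
      (fun x => by simp [Finset.mem_erase]) (fun a => p θ (e.symm (v, w) a))]
    exact Finset.prod_congr rfl fun a _ => by rw [hxj v w a.1 a.2]
  calc ∑ v : X, ∑ w : {j // j ≠ i} → X,
        (∏ a, p θ (e.symm (v, w) a)) *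
          (F (e.symm (v, w)) * (deriv (fun t => p t (e.symm (v, w) i)) θ / p θ (e.symm (v, w) i)))
      = ∑ v : X, ∑ w : {j // j ≠ i} → X, deriv (fun t => p t v) θ *
          ((∏ j : {j // j ≠ i}, p θ (w j)) * F (e.symm (c, w))) := by
        refine Finset.sum_congr rfl fun v _ => Finset.sum_congr rfl fun w _ => ?_
        rw [hprod v w, hxi v w,
          hF (e.symm (v, w)) (e.symm (c, w)) (fun j hj => by rw [hxj v w j hj, hxj c w j hj])]
        have hne : p θ v ≠ 0 := (hpos θ v).ne'
        field_simp
    _ = 0 := by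
        rw [← Finset.sum_mul_sum, sum_deriv_zero p θ hsum hdiff, zero_mul]

end Helpers

section Main

variable {X : Type*} [Fintype X] [Nonempty X] (p : ℝ → X → ℝ) (θ : ℝ)

lemma main_term (hsum : ∀ θ, ∑ x, p θ x = 1)
    (g : X → ℝ) {n k : ℕ} (I : Finset (Fin n)) (hI : I.card = k) (i : Fin n) (hi : i ∈ I) :
    ∑ x : Fin n → X, (∏ a, p θ (x a)) *
        (finsetMax I (fun j => g (x j)) * (deriv (fun t => p t (x i)) θ / p θ (x i)))
      = ∑ y : Fin k → X, (∏ a, p θ (y a)) *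
          (finsetMax Finset.univ (fun j => g (y j)) *
            (deriv (fun t => p t (y ((I.equivFin.trans (finCongr hI)) ⟨i, hi⟩))) θ
              / p θ (y ((I.equivFin.trans (finCongr hI)) ⟨i, hi⟩)))) := by
  classical
  set e := I.equivFin.trans (finCongr hI) with he
  have h1 : ∑ x : Fin n → X, (∏ a, p θ (x a)) *
      (finsetMax I (fun j => g (x j)) * (deriv (fun t => p t (x i)) θ / p θ (x i)))
    = ∑ z : {a // a ∈ I} → X, (∏ a, p θ (z a)) *
        (finsetMax Finset.univ (fun a => g (z a)) *
          (deriv (fun t => p t (z ⟨i, hi⟩)) θ / p θ (z ⟨i, hi⟩))) := by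
    rw [← marginal p θ hsum I (fun z => finsetMax Finset.univ (fun a => g (z a)) *
      (deriv (fun t => p t (z ⟨i, hi⟩)) θ / p θ (z ⟨i, hi⟩)))]
    refine Finset.sum_congr rfl fun x _ => ?_
    rw [finsetMax_attach I (fun j => g (x j))]
  have h2 : ∑ z : {a // a ∈ I} → X, (∏ a, p θ (z a)) *
        (finsetMax Finset.univ (fun a => g (z a)) *
          (deriv (fun t => p t (z ⟨i, hi⟩)) θ / p θ (z ⟨i, hi⟩)))
      = ∑ y : Fin k → X, (∏ a, p θ (y a)) *
          (finsetMax Finset.univ (fun j => g (y j)) *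
            (deriv (fun t => p t (y (e ⟨i, hi⟩))) θ / p θ (y (e ⟨i, hi⟩)))) := by
    refine Fintype.sum_equiv (Equiv.arrowCongr e (Equiv.refl X)) _ _ fun z => ?_
    congr 1
    · exact (Equiv.prod_comp e.symm fun a => p θ (z a)).symm
    · congr 1
      · exact (finsetMax_equiv e.symm fun a => g (z a)).symm
      · simp [Equiv.arrowCongr]
  exact h1.trans h2

end Main

/-- The estimator ∑_i s_i^{loo−1}(x) ∇_θ log p(xᵢ|θ), with
s_i^{loo−1}(x) = (1/C(n,k)) ∑_{|I| = k, i ∈ I} (max_{j∈I} g(x_j) − max_{b∈I∖{i}} g(x_b)),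
is an unbiased estimator of the gradient of
maxg@k(θ) = ∑_{y : Fin k → X} (∏ᵢ p(θ, yᵢ)) · max_{1≤i≤k} g(yᵢ), for 2 ≤ k ≤ n. -/
theorem unbiased_loo_minus_one_maxgk_gradient_estimator {X : Type*} [Fintype X] [Nonempty X]
    (p : ℝ → X → ℝ)
    (hpos : ∀ θ x, 0 < p θ x)
    (hsum : ∀ θ, ∑ x, p θ x = 1)
    (hdiff : ∀ x, Differentiable ℝ fun θ => p θ x)
    (g : X → ℝ)
    (n k : ℕ) (hk : 2 ≤ k) (hkn : k ≤ n) (θ : ℝ) :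
    ∑ x : Fin n → X, (∏ i, p θ (x i)) *
        ∑ i, ((1 / (n.choose k : ℝ)) *
            ∑ I ∈ (Finset.powersetCard k (Finset.univ : Finset (Fin n))).filter
                (fun I => i ∈ I),
              (finsetMax I (fun j => g (x j)) - finsetMax (I.erase i) (fun b => g (x b)))) *
          (deriv (fun t => p t (x i)) θ / p θ (x i))
      = deriv (fun t => ∑ y : Fin k → X,
          (∏ i, p t (y i)) * finsetMax (Finset.univ : Finset (Fin k)) (fun i => g (y i))) θ := by
  classical
  have hCpos : (0 : ℝ) < (n.choose k : ℝ) := by exact_mod_cast Nat.choose_pos hkn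
  set P := Finset.powersetCard k (Finset.univ : Finset (Fin n)) with hP
  set M : (Fin k → X) → ℝ := fun y => finsetMax Finset.univ (fun i => g (y i)) with hM
  set D : ℝ := ∑ y : Fin k → X, (∑ i, (∏ j ∈ Finset.univ.erase i, p θ (y j)) *
      deriv (fun t => p t (y i)) θ) * M y with hD
  -- RHS equals D
  have hRHS : deriv (fun t => ∑ y : Fin k → X, (∏ i, p t (y i)) * M y) θ = D := by
    have h : ∀ y : Fin k → X, HasDerivAt (fun t => ∏ j, p t (y j))
        (∑ i, (∏ j ∈ Finset.univ.erase i, p θ (y j)) * deriv (fun t => p t (y i)) θ) θ := by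
      intro y
      have := HasDerivAt.fun_finsetProd (u := Finset.univ) (f := fun j t => p t (y j))
        (f' := fun j => deriv (fun t => p t (y j)) θ) (x := θ)
        (fun j _ => ((hdiff (y j)) θ).hasDerivAt)
      simpa [smul_eq_mul] using this
    have H : HasDerivAt (fun t => ∑ y : Fin k → X, (∏ i, p t (y i)) * M y) D θ := by
      rw [hD]
      exact HasDerivAt.fun_sum fun y _ => (h y).mul_const (M y)
    exact H.deriv
  -- alternative form of D (score-function form over Fin k)
  have hDalt : ∑ i' : Fin k, ∑ y : Fin k → X, (∏ a, p θ (y a)) *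
      (M y * (deriv (fun t => p t (y i')) θ / p θ (y i'))) = D := by
    rw [hD, Finset.sum_comm]
    refine Finset.sum_congr rfl fun y _ => ?_
    rw [Finset.sum_mul]
    refine Finset.sum_congr rfl fun i' _ => ?_
    rw [← Finset.mul_prod_erase Finset.univ (fun a => p θ (y a)) (Finset.mem_univ i')]
    have hne : p θ (y i') ≠ 0 := (hpos θ (y i')).ne'
    field_simp
  -- swap of the double sums over i and I
  have swap : ∀ f : Fin n → Finset (Fin n) → ℝ,
      (∑ i, ∑ I ∈ P.filter (fun I => i ∈ I), f i I) = ∑ I ∈ P, ∑ i ∈ I, f i I := by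
    intro f
    simp_rw [Finset.sum_filter]
    rw [Finset.sum_comm]
    exact Finset.sum_congr rfl fun I _ => by
      rw [Finset.sum_ite_mem, Finset.univ_inter]
  -- per-set inner sum equals the score-function form
  have step2 : ∀ I ∈ P, ∑ i ∈ I, (∑ x : Fin n → X, (∏ a, p θ (x a)) *
        ((finsetMax I (fun j => g (x j)) - finsetMax (I.erase i) (fun b => g (x b))) *
          (deriv (fun t => p t (x i)) θ / p θ (x i))))
      = ∑ i' : Fin k, ∑ y : Fin k → X, (∏ a, p θ (y a)) *
          (M y * (deriv (fun t => p t (y i')) θ / p θ (y i'))) := by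
    intro I hIP
    obtain ⟨-, hI⟩ := Finset.mem_powersetCard.mp hIP
    have hTi : ∀ (i : Fin n) (hi : i ∈ I), (∑ x : Fin n → X, (∏ a, p θ (x a)) *
          ((finsetMax I (fun j => g (x j)) - finsetMax (I.erase i) (fun b => g (x b))) *
            (deriv (fun t => p t (x i)) θ / p θ (x i))))
        = ∑ y : Fin k → X, (∏ a, p θ (y a)) *
            (M y * (deriv (fun t => p t (y ((I.equivFin.trans (finCongr hI)) ⟨i, hi⟩))) θ
              / p θ (y ((I.equivFin.trans (finCongr hI)) ⟨i, hi⟩)))) := by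
      intro i hi
      have hsplit : (∑ x : Fin n → X, (∏ a, p θ (x a)) *
            ((finsetMax I (fun j => g (x j)) - finsetMax (I.erase i) (fun b => g (x b))) *
              (deriv (fun t => p t (x i)) θ / p θ (x i))))
          = (∑ x : Fin n → X, (∏ a, p θ (x a)) *
              (finsetMax I (fun j => g (x j)) * (deriv (fun t => p t (x i)) θ / p θ (x i))))
            - ∑ x : Fin n → X, (∏ a, p θ (x a)) *
              (finsetMax (I.erase i) (fun b => g (x b)) *
                (deriv (fun t => p t (x i)) θ / p θ (x i))) := by
        rw [← Finset.sum_sub_distrib]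
        exact Finset.sum_congr rfl fun x _ => by ring
      rw [hsplit, score_zero p θ hpos hsum hdiff i
          (fun x => finsetMax (I.erase i) (fun b => g (x b)))
          (fun x y h => congrArg (WithBot.unbotD 0)
            (Finset.sup_congr rfl fun b hb =>
              congrArg _ (congrArg g (h b (Finset.ne_of_mem_erase hb))))),
        sub_zero, main_term p θ hsum g I hI i hi]
    calc ∑ i ∈ I, (∑ x : Fin n → X, (∏ a, p θ (x a)) *
          ((finsetMax I (fun j => g (x j)) - finsetMax (I.erase i) (fun b => g (x b))) *
            (deriv (fun t => p t (x i)) θ / p θ (x i))))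
        = ∑ a ∈ I.attach, ∑ y : Fin k → X, (∏ b, p θ (y b)) *
            (M y * (deriv (fun t => p t (y ((I.equivFin.trans (finCongr hI)) a))) θ
              / p θ (y ((I.equivFin.trans (finCongr hI)) a)))) := by
          rw [← Finset.sum_attach I]
          exact Finset.sum_congr rfl fun a _ => hTi a.1 a.2
      _ = ∑ i' : Fin k, ∑ y : Fin k → X, (∏ a, p θ (y a)) *
            (M y * (deriv (fun t => p t (y i')) θ / p θ (y i'))) := by
          rw [← Finset.univ_eq_attach]
          exact Equiv.sum_comp (I.equivFin.trans (finCongr hI))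
            (fun i' => ∑ y : Fin k → X, (∏ a, p θ (y a)) *
              (M y * (deriv (fun t => p t (y i')) θ / p θ (y i'))))
  -- main computation
  calc ∑ x : Fin n → X, (∏ i, p θ (x i)) *
        ∑ i, ((1 / (n.choose k : ℝ)) *
            ∑ I ∈ P.filter (fun I => i ∈ I),
              (finsetMax I (fun j => g (x j)) - finsetMax (I.erase i) (fun b => g (x b)))) *
          (deriv (fun t => p t (x i)) θ / p θ (x i))
      = ∑ x : Fin n → X, ∑ i, (1 / (n.choose k : ℝ)) *
          ∑ I ∈ P.filter (fun I => i ∈ I), (∏ a, p θ (x a)) *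
            ((finsetMax I (fun j => g (x j)) - finsetMax (I.erase i) (fun b => g (x b))) *
              (deriv (fun t => p t (x i)) θ / p θ (x i))) := by
        refine Finset.sum_congr rfl fun x _ => ?_
        rw [Finset.mul_sum]
        refine Finset.sum_congr rfl fun i _ => ?_
        have hr : ∀ Q S sc : ℝ, Q * ((1 / (n.choose k : ℝ) * S) * sc)
            = 1 / (n.choose k : ℝ) * (S * (sc * Q)) := by intros; ring
        rw [hr, Finset.sum_mul]
        congr 1
        exact Finset.sum_congr rfl fun I _ => by ring
    _ = (1 / (n.choose k : ℝ)) * ∑ i, ∑ I ∈ P.filter (fun I => i ∈ I),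
          ∑ x : Fin n → X, (∏ a, p θ (x a)) *
            ((finsetMax I (fun j => g (x j)) - finsetMax (I.erase i) (fun b => g (x b))) *
              (deriv (fun t => p t (x i)) θ / p θ (x i))) := by
        rw [Finset.sum_congr rfl fun (x : Fin n → X) _ =>
          (Finset.mul_sum (Finset.univ : Finset (Fin n)) _ ((1:ℝ) / (n.choose k : ℝ))).symm,
          ← Finset.mul_sum]
        congr 1
        rw [Finset.sum_comm]
        exact Finset.sum_congr rfl fun i _ => Finset.sum_comm
    _ = (1 / (n.choose k : ℝ)) * ∑ I ∈ P, ∑ i ∈ I,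
          ∑ x : Fin n → X, (∏ a, p θ (x a)) *
            ((finsetMax I (fun j => g (x j)) - finsetMax (I.erase i) (fun b => g (x b))) *
              (deriv (fun t => p t (x i)) θ / p θ (x i))) := by
        rw [swap]
    _ = (1 / (n.choose k : ℝ)) * ∑ I ∈ P, D := by
        congr 1
        refine Finset.sum_congr rfl fun I hIP => ?_
        rw [step2 I hIP, hDalt]
    _ = D := by
        rw [Finset.sum_const, hP, Finset.card_powersetCard, Finset.card_univ, Fintype.card_fin,
          nsmul_eq_mul]
        field_simp
    _ = deriv (fun t => ∑ y : Fin k → X,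
          (∏ i, p t (y i)) * finsetMax (Finset.univ : Finset (Fin k)) (fun i => g (y i))) θ := by
        rw [← hRHS]
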